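/- Let u_0, ..., u_{a−1} be linear endomorphism data on finite-dimensional vector spaces E_0, ..., E_{a−1} over a field K, with u_i : E_i → E_{i+1} (indices mod a), all E_i of the same dimension. Let E = E_0 ⊕ ⋯ ⊕ E_{a−1} and u : E → E the map with u|_{E_i} = u_i. Then the reverse characteristic polynomial satisfies det(1 − u·T) = det(1 − (u_{a−1}∘⋯∘u_1∘u_0)·T^a). -/

import Mathlib

open Matrix Polynomial Finset

namespace SkewCyclicAux3

variable {R : Type*} [CommRing R] {a n : ℕ} [NeZero a]

open Fin.CommRing

def blk (F : Fin a → Fin a → Matrix (Fin n) (Fin n) R) :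
    Matrix (Fin a × Fin n) (Fin a × Fin n) R :=
  fun p q => F p.1 q.1 p.2 q.2

lemma blk_mul (F G : Fin a → Fin a → Matrix (Fin n) (Fin n) R) :
    blk F * blk G = blk (fun i j => ∑ k, F i k * G k j) := by
  ext ⟨i, x⟩ ⟨j, y⟩
  simp [blk, Matrix.mul_apply, Fintype.sum_prod_type, Matrix.sum_apply]

lemma one_eq_blk :
    (1 : Matrix (Fin a × Fin n) (Fin a × Fin n) R) =
      blk (fun i j => if i = j then (1 : Matrix (Fin n) (Fin n) R) else 0) := by
  ext ⟨i, x⟩ ⟨j, y⟩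
  simp only [blk, Matrix.one_apply, Prod.mk.injEq]
  split_ifs with h1 h2 h2 <;> simp_all [Matrix.one_apply]

lemma blk_congr {F G : Fin a → Fin a → Matrix (Fin n) (Fin n) R}
    (h : ∀ i j, F i j = G i j) : blk F = blk G := by
  funext p q; simp only [blk, h]

lemma sub_blk (F G : Fin a → Fin a → Matrix (Fin n) (Fin n) R) :
    blk F - blk G = blk (fun i j => F i j - G i j) := rfl

def Qm (A : Fin a → Matrix (Fin n) (Fin n) R) (i : Fin a) : ℕ → Matrix (Fin n) (Fin n) R
  | 0 => 1
  | k + 1 => A (i + (k : Fin a)) * Qm A i k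

lemma Qm_succ' (A : Fin a → Matrix (Fin n) (Fin n) R) (i : Fin a) (k : ℕ) :
    Qm A i (k + 1) = Qm A (i + 1) k * A i := by
  induction k generalizing i with
  | zero => simp [Qm]
  | succ k ih =>
    have h1 : Qm A i (k + 2) = A (i + ((k+1 : ℕ) : Fin a)) * Qm A i (k + 1) := rfl
    have h2 : Qm A (i + 1) (k + 1) = A ((i + 1) + (k : Fin a)) * Qm A (i + 1) k := rfl
    rw [h1, ih, h2, mul_assoc]
    congr 2
    push_cast
    ring

def Cm (A : Fin a → Matrix (Fin n) (Fin n) R) :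
    Matrix (Fin a × Fin n) (Fin a × Fin n) R :=
  blk (fun i j => if i = j + 1 then A j else 0)

lemma Cm_pow (A : Fin a → Matrix (Fin n) (Fin n) R) (k : ℕ) :
    Cm A ^ k = blk (fun i j => if i = j + (k : Fin a) then Qm A j k else 0) := by
  induction k with
  | zero =>
    rw [pow_zero, one_eq_blk]
    apply blk_congr; intro i j
    simp [Qm]
  | succ k ih =>
    rw [pow_succ, ih, Cm, blk_mul]
    apply blk_congr; intro i j
    have : ∀ m : Fin a,
        (if i = m + (k : Fin a) then Qm A m k else 0) * (if m = j + 1 then A j else 0)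
          = if m = j + 1 then (if i = m + (k : Fin a) then Qm A m k else 0) * A j else 0 := by
      intro m; split_ifs <;> simp
    rw [Finset.sum_congr rfl (fun m _ => this m), Finset.sum_ite_eq' univ (j+1)]
    simp only [mem_univ, if_true]
    have hcast : (j + 1) + (k : Fin a) = j + ((k+1 : ℕ) : Fin a) := by push_cast; ring
    rw [hcast]
    split_ifs with h
    · rw [← Qm_succ']
    · rw [zero_mul]

lemma fin_add_one_cases (j : Fin a) :
    (j + 1 = 0 ∧ j.val + 1 = a) ∨ ((j + 1).val = j.val + 1 ∧ j + 1 ≠ 0) := by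
  obtain ⟨a', rfl⟩ : ∃ a', a = a' + 1 := ⟨a - 1, (Nat.succ_pred_eq_of_pos (NeZero.pos a)).symm⟩
  by_cases h : j = Fin.last a'
  · left
    subst h
    exact ⟨Fin.last_add_one a', by simp [Fin.last]⟩
  · right
    have hv : (j + 1).val = j.val + 1 := by
      rw [Fin.val_add_one, if_neg h]
    refine ⟨hv, fun h0 => ?_⟩
    have : (j + 1).val = 0 := by rw [h0]; rfl
    omega

lemma fin_one_ne_zero (h : (2:ℕ) ≤ a) : (1 : Fin a) ≠ 0 := by
  obtain ⟨a', rfl⟩ : ∃ a', a = a' + 1 := ⟨a - 1, (Nat.succ_pred_eq_of_pos (NeZero.pos a)).symm⟩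
  intro h0
  have : (1 : Fin (a'+1)).val = 0 := by rw [h0]; rfl
  rw [Fin.val_one', Nat.mod_eq_of_lt h] at this
  omega

lemma fin_a_eq_one (h : (1 : Fin a) = 0) : a = 1 := by
  by_contra hne
  have h1 := NeZero.pos a
  exact fin_one_ne_zero (by omega) h

/-- entries of `Em`. -/
def Ef (A : Fin a → Matrix (Fin n) (Fin n) R) (i j : Fin a) : Matrix (Fin n) (Fin n) R :=
  if i = j then 1 else if i = 0 then Qm A j (a - j.val) else 0

/-- entries of `Tm`. -/
def Tf (A : Fin a → Matrix (Fin n) (Fin n) R) (i j : Fin a) : Matrix (Fin n) (Fin n) R :=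
  if i = j then (if i = 0 then 1 - Qm A 0 a else 1)
    else if i = j + 1 ∧ i ≠ 0 then -(A j) else 0

def Em (A : Fin a → Matrix (Fin n) (Fin n) R) :
    Matrix (Fin a × Fin n) (Fin a × Fin n) R := blk (Ef A)

def Tm (A : Fin a → Matrix (Fin n) (Fin n) R) :
    Matrix (Fin a × Fin n) (Fin a × Fin n) R := blk (Tf A)

lemma step (A : Fin a → Matrix (Fin n) (Fin n) R) (i j : Fin a) :
    Ef A i j - Ef A i (j + 1) * A j = Tf A i j := by
  by_cases hi : i = 0
  · subst hi
    by_cases hj : j = 0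
    · subst hj
      rcases fin_add_one_cases (0 : Fin a) with ⟨h0, hval⟩ | ⟨hval, hne⟩
      · -- a = 1
        have ha : a = 1 := by simpa using hval.symm
        have hQ : Qm A 0 a = A 0 := by subst ha; simp [Qm]
        simp [Ef, Tf, h0, hQ]
      · have h01 : (0 : Fin a) ≠ 0 + 1 := fun h => hne h.symm
        have hval0 : ((0:Fin a) + 1).val = 1 := by simpa using hval
        have h2 : 2 ≤ a := by
          have h1 := NeZero.pos a
          rcases Nat.lt_or_ge a 2 with h | h
          · have ha : a = 1 := by omega
            exact absurd (by subst ha; exact Subsingleton.elim _ _) hne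
          · exact h
        have hQ : Qm A 0 a = Qm A (0+1) (a - ((0:Fin a)+1).val) * A 0 := by
          have harg : a - ((0:Fin a)+1).val + 1 = a := by
            rw [hval0]; omega
          exact (congrArg (Qm A 0) harg).symm.trans (Qm_succ' A 0 _)
        simp only [Ef, Tf, if_pos rfl, if_neg h01, hQ]
        simp
    · -- j ≠ 0, row 0 : result must be 0
      have h0j : (0 : Fin a) ≠ j := fun h => hj h.symm
      rcases fin_add_one_cases j with ⟨h0, hval⟩ | ⟨hval, hne⟩
      · -- j+1 = 0 : Ef 0 (j+1) = Ef 0 0 = 1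
        have hav : a - j.val = 1 := by omega
        have hQ : Qm A j (a - j.val) = A j := by
          rw [hav, show Qm A j 1 = A (j + (0:Fin a)) * Qm A j 0 from rfl]
          simp [Qm]
        simp [Ef, Tf, h0, h0j, hQ, hj]
      · have h0j1 : (0 : Fin a) ≠ j + 1 := fun h => hne h.symm
        have hjv : j.val < a := j.isLt
        have hsub : a - j.val = (a - (j+1).val) + 1 := by omega
        have hQ : Qm A j (a - j.val) = Qm A (j+1) (a - (j+1).val) * A j := by
          rw [hsub, Qm_succ']
        simp [Ef, Tf, h0j, h0j1, hQ, hj]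
  · -- i ≠ 0
    by_cases hij : i = j
    · subst hij
      have hii1 : i ≠ i + 1 := by
        intro h
        have h1 : (1 : Fin a) = 0 := by
          have := left_eq_add.mp h
          exact this
        have ha : a = 1 := fin_a_eq_one h1
        apply hi
        subst ha
        exact Subsingleton.elim i 0
      simp [Ef, Tf, hi, hii1]
    · by_cases hij1 : i = j + 1
      · have ha : a ≠ 1 := fun h => hi (by subst h; exact Subsingleton.elim _ _)
        have hj10 : j + 1 ≠ 0 := hij1 ▸ hi
        simp [Ef, Tf, hi, hij, hij1, ha, hj10]
      · simp [Ef, Tf, hi, hij, hij1]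

lemma elimination (A : Fin a → Matrix (Fin n) (Fin n) R) :
    Em A * (1 - Cm A) = Tm A := by
  rw [one_eq_blk, Em, Cm, sub_blk, blk_mul, Tm]
  apply blk_congr
  intro i j
  have hsplit : ∀ m : Fin a,
      Ef A i m * ((if m = j then 1 else 0) - (if m = j + 1 then A j else 0))
      = (if m = j then Ef A i m else 0)
        - (if m = j + 1 then Ef A i m * A j else 0) := by
    intro m
    split_ifs <;> simp [mul_sub]
  calc ∑ m, Ef A i m * ((if m = j then 1 else 0) - (if m = j + 1 then A j else 0))
      = ∑ m, ((if m = j then Ef A i m else 0) - (if m = j + 1 then Ef A i m * A j else 0)) :=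
        Finset.sum_congr rfl (fun m _ => hsplit m)
    _ = Ef A i j - Ef A i (j + 1) * A j := by
        rw [Finset.sum_sub_distrib, Finset.sum_ite_eq' univ j, Finset.sum_ite_eq' univ (j+1)]
        simp
    _ = Tf A i j := step A i j

lemma det_Em (A : Fin a → Matrix (Fin n) (Fin n) R) : (Em A).det = 1 := by
  have htri : (Em A).BlockTriangular Prod.fst := by
    rintro ⟨i, x⟩ ⟨j, y⟩ h
    have hij : i ≠ j := fun hh => absurd hh.symm (ne_of_lt h)
    have hi0 : i ≠ 0 := by
      intro hh
      rw [hh] at h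
      exact absurd h (by simpa using Fin.zero_le j)
    simp [Em, blk, Ef, hij, hi0]
  rw [htri.det_fintype]
  apply Finset.prod_eq_one
  intro k _
  have : (Em A).toSquareBlock Prod.fst k = 1 := by
    ext ⟨⟨i, x⟩, hi⟩ ⟨⟨j, y⟩, hj⟩
    simp only [Matrix.toSquareBlock_def] at hi hj ⊢
    subst hi; subst hj
    simp [Em, blk, Ef, Matrix.one_apply, Subtype.ext_iff, Prod.ext_iff]
  rw [this, Matrix.det_one]

lemma one_apply_comm (x y : Fin n) :
    (1 : Matrix (Fin n) (Fin n) R) x y = (1 : Matrix (Fin n) (Fin n) R) y x := by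
  by_cases h : x = y
  · subst h; rfl
  · rw [Matrix.one_apply_ne h, Matrix.one_apply_ne (Ne.symm h)]

lemma ite_one_comm (x y : Fin n) :
    (if y = x then (1:R) else 0) = if x = y then 1 else 0 := by
  by_cases h : x = y
  · subst h; rfl
  · rw [if_neg (fun hh => h hh.symm), if_neg h]

lemma det_Tm (A : Fin a → Matrix (Fin n) (Fin n) R) :
    (Tm A).det = (1 - Qm A 0 a).det := by
  rw [← Matrix.det_transpose]
  have htri : (Tm A)ᵀ.BlockTriangular Prod.fst := by
    rintro ⟨i, x⟩ ⟨j, y⟩ h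
    have hij : j ≠ i := ne_of_lt h
    have hcorner : ¬(j = i + 1 ∧ j ≠ 0) := by
      rintro ⟨h1, h2⟩
      rcases fin_add_one_cases i with ⟨h0, hval⟩ | ⟨hval, hne⟩
      · exact h2 (h1.trans h0)
      · have : j.val = i.val + 1 := by rw [h1, hval]
        have hlt : (j : Fin a) < i := h
        rw [Fin.lt_def] at hlt
        omega
    simp [Tm, Matrix.transpose_apply, blk, Tf, hij, hcorner]
  rw [htri.det_fintype]
  have hblock : ∀ k : Fin a, k ≠ 0 → ((Tm A)ᵀ.toSquareBlock Prod.fst k).det = 1 := by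
    intro k hk
    have : (Tm A)ᵀ.toSquareBlock Prod.fst k = 1 := by
      have hcorner : ∀ m : Fin a, m ≠ 0 → ¬(m = m + 1 ∧ m ≠ 0) := by
        rintro m hm ⟨h1, -⟩
        have h10 : (1 : Fin a) = 0 := (left_eq_add.mp h1)
        have ha : a = 1 := fin_a_eq_one h10
        apply hm
        subst ha
        exact Subsingleton.elim m 0
      ext ⟨⟨i, x⟩, hi⟩ ⟨⟨j, y⟩, hj⟩
      simp only [Matrix.toSquareBlock_def] at hi hj ⊢
      subst hi; subst hj
      simp [Tm, Matrix.transpose_apply, blk, Tf, hk, hcorner _ hk,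
        Matrix.one_apply, Subtype.ext_iff, Prod.ext_iff, one_apply_comm, ite_one_comm]
    rw [this, Matrix.det_one]
  rw [Fintype.prod_eq_single (0 : Fin a) (fun k hk => hblock k hk)]
  -- the block at 0
  let e : {p : Fin a × Fin n // p.1 = 0} ≃ Fin n :=
    { toFun := fun p => p.1.2
      invFun := fun x => ⟨(0, x), rfl⟩
      left_inv := by rintro ⟨⟨i, x⟩, hi⟩; dsimp at hi; subst hi; rfl
      right_inv := fun x => rfl }
  have hblock0 : (Tm A)ᵀ.toSquareBlock Prod.fst 0 = ((1 - Qm A 0 a)ᵀ).submatrix e e := by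
    ext ⟨⟨i, x⟩, hi⟩ ⟨⟨j, y⟩, hj⟩
    simp only [Matrix.toSquareBlock_def] at hi hj ⊢
    subst hi; subst hj
    simp [Tm, Matrix.transpose_apply, blk, Tf, Matrix.submatrix_apply, e,
      Matrix.sub_apply, one_apply_comm, ite_one_comm, Matrix.one_apply]
  rw [hblock0, Matrix.det_submatrix_equiv_self, Matrix.det_transpose]

theorem det_one_sub_Cm (A : Fin a → Matrix (Fin n) (Fin n) R) :
    (1 - Cm A).det = (1 - Qm A 0 a).det := by
  have h := congrArg Matrix.det (elimination A)
  rw [Matrix.det_mul, det_Em, one_mul, det_Tm] at h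
  exact h

lemma Qm_smul_map {S : Type*} [CommRing S] (f : R →+* S) (r : S)
    (A : Fin a → Matrix (Fin n) (Fin n) R) (i : Fin a) (k : ℕ) :
    Qm (fun m => r • (A m).map f) i k = r ^ k • (Qm A i k).map f := by
  induction k with
  | zero =>
    simp only [Qm, pow_zero, one_smul]
    ext x y
    by_cases h : x = y <;> simp [h, Matrix.one_apply, Matrix.map_apply]
  | succ k ih =>
    show (r • (A (i + (k : Fin a))).map f) * Qm (fun m => r • (A m).map f) i k = _
    rw [ih]
    show _ = r ^ (k+1) • (A (i + (k : Fin a)) * Qm A i k).map f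
    rw [Matrix.map_mul, smul_mul_assoc, mul_smul_comm, smul_smul, pow_succ, mul_comm (r^k) r]


end SkewCyclicAux3

open SkewCyclicAux3 LinearMap Module

/-- Let `E₀, …, E_{a−1}` be finite-dimensional vector spaces of equal dimension over
a field `K`, `uf i : E i →ₗ E (i+1)` (indices mod `a`), `E = E₀ ⊕ ⋯ ⊕ E_{a−1}` and
`u : E →ₗ E` the map with `u|_{Eᵢ} = uf i`. Then the reverse characteristic
polynomial satisfies `det(1 − u·T) = det(1 − (uf_{a−1} ∘ ⋯ ∘ uf₀)·Tᵃ)`, where the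
composite is realized as `π₀ ∘ uᵃ ∘ ι₀ : E₀ →ₗ E₀`. -/
theorem skew_cyclic_rev_charpoly (K : Type*) [Field K] (a : ℕ) [NeZero a]
    (E : Fin a → Type*) [∀ i, AddCommGroup (E i)] [∀ i, Module K (E i)]
    [∀ i, FiniteDimensional K (E i)]
    (hdim : ∀ i j, Module.finrank K (E i) = Module.finrank K (E j))
    (uf : ∀ i : Fin a, E i →ₗ[K] E (i + 1))
    (u : (∀ i, E i) →ₗ[K] (∀ i, E i))
    (hu : ∀ (x : ∀ i, E i) (i : Fin a), u x (i + 1) = uf i (x i))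
    (w : E 0 →ₗ[K] E 0)
    (hw : w = (LinearMap.proj 0).comp ((u ^ a).comp (LinearMap.single K E 0))) :
    (LinearMap.charpoly u).reverse =
      ((LinearMap.charpoly w).reverse).comp (Polynomial.X ^ a) := by
  classical
  set n := Module.finrank K (E 0) with hn
  let bs : ∀ i, Basis (Fin n) K (E i) :=
    fun i => (Module.finBasis K (E i)).reindex (finCongr (hdim i 0))
  let σ : (Σ _ : Fin a, Fin n) ≃ Fin a × Fin n := Equiv.sigmaEquivProd (Fin a) (Fin n)
  let B : Basis (Fin a × Fin n) K (∀ i, E i) := (Pi.basis bs).reindex σ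
  -- entries of matrices in the basis `B`
  have hBapply : ∀ p : Fin a × Fin n, B p = Pi.single p.1 (bs p.1 p.2) := by
    rintro ⟨i, x⟩
    rw [show B (i,x) = (Pi.basis bs) (σ.symm (i,x)) from Basis.reindex_apply _ _ _]
    simp [σ]
  have hBrepr : ∀ (v : ∀ i, E i) (p : Fin a × Fin n),
      B.repr v p = (bs p.1).repr (v p.1) p.2 := by
    rintro v ⟨j, y⟩
    rw [show B.repr v (j,y) = (Pi.basis bs).repr v (σ.symm (j,y)) from
      Basis.repr_reindex_apply _ _ _ _]
    simp [σ]
  have hMentry : ∀ (f : (∀ i, E i) →ₗ[K] (∀ i, E i)) (p q : Fin a × Fin n),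
      LinearMap.toMatrix B B f p q = (bs p.1).repr (f (Pi.single q.1 (bs q.1 q.2)) p.1) p.2 := by
    intro f p q
    rw [LinearMap.toMatrix_apply, hBapply, hBrepr]
  let A : Fin a → Matrix (Fin n) (Fin n) K :=
    fun i => LinearMap.toMatrix (bs i) (bs (i + 1)) (uf i)
  -- the matrix of `u` is the cyclic block matrix
  have hM : LinearMap.toMatrix B B u = Cm A := by
    ext ⟨j, y⟩ ⟨i, x⟩
    rw [hMentry]
    obtain ⟨i', rfl⟩ : ∃ i', i' + 1 = j := ⟨j - 1, sub_add_cancel j 1⟩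
    rw [hu]
    by_cases hii : i' = i
    · subst hii
      rw [Pi.single_eq_same]
      simp only [Cm, blk]
      rw [if_pos trivial]
      show _ = (LinearMap.toMatrix (bs i') (bs (i' + 1))) (uf i') y x
      rw [LinearMap.toMatrix_apply]
    · rw [Pi.single_eq_of_ne hii, map_zero]
      have hcond : ¬(i' + 1 = i + 1) := fun h => hii (add_right_cancel h)
      simp only [Cm, blk]
      rw [if_neg hcond]
      simp
  -- the matrix of `w` is `Qm A 0 a`
  have hW : LinearMap.toMatrix (bs 0) (bs 0) w = Qm A 0 a := by
    have h1 : LinearMap.toMatrix B B (u ^ a) = Cm A ^ a := by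
      rw [← LinearMap.toMatrix_pow, hM]
    ext y x
    have h2 : (LinearMap.toMatrix B B (u ^ a)) (0, y) (0, x) = Qm A 0 a y x := by
      rw [h1, Cm_pow]
      simp only [blk]
      rw [if_pos (by simp [Fin.natCast_self])]
    rw [← h2, hMentry, LinearMap.toMatrix_apply, hw]
    simp [LinearMap.coe_single]
  -- now pass to reverse charpolys
  rw [← LinearMap.charpoly_toMatrix u B, ← LinearMap.charpoly_toMatrix w (bs 0)]
  rw [Matrix.reverse_charpoly, Matrix.reverse_charpoly]
  rw [Matrix.charpolyRev, Matrix.charpolyRev]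
  rw [hM, hW]
  -- LHS
  have hL : (1 : Matrix (Fin a × Fin n) (Fin a × Fin n) (Polynomial K)) -
      (Polynomial.X : Polynomial K) • (Cm A).map Polynomial.C
        = 1 - Cm (fun i => (Polynomial.X : Polynomial K) • (A i).map Polynomial.C) := by
    congr 1
    ext ⟨j, y⟩ ⟨i, x⟩
    simp only [Matrix.smul_apply, Matrix.map_apply, Cm, blk, smul_eq_mul]
    split_ifs <;> simp
  rw [hL, det_one_sub_Cm, Qm_smul_map]
  -- RHS
  rw [Polynomial.comp_eq_aeval, AlgHom.map_det]
  have hmap : (Polynomial.aeval (Polynomial.X ^ a :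
        Polynomial K)).mapMatrix (1 - (Polynomial.X : Polynomial K) • (Qm A 0 a).map Polynomial.C)
      = 1 - (Polynomial.X ^ a : Polynomial K) • (Qm A 0 a).map Polynomial.C := by
    apply Matrix.ext; intro p q
    by_cases h : p = q <;>
      simp [h, AlgHom.mapMatrix_apply, Matrix.map_apply, Matrix.one_apply, Matrix.sub_apply,
        Matrix.smul_apply, smul_eq_mul]
  rw [hmap]
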